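/- Let K = O(n) ⊂ G = GL(n,ℝ) and let μ be a (bi-invariant) Haar measure on G. Suppose φ, ψ : G → ℂ are continuous, compactly supported, and K-biinvariant (φ(k₁gk₂) = φ(g) for all k₁,k₂ ∈ K, g ∈ G, and similarly for ψ). Then the convolutions commute: for all g ∈ G, ∫_G φ(g·h^{−1})·ψ(h) dμ(h) = ∫_G ψ(g·h^{−1})·φ(h) dμ(h). -/

import Mathlib

open MeasureTheory Matrix
open scoped ENNReal NNReal

namespace GelfandAux

variable {n : ℕ}

/-- Transpose as a map on `GL (Fin n) ℝ`. -/
def tr (g : GL (Fin n) ℝ) : GL (Fin n) ℝ where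
  val := (g.val)ᵀ
  inv := (g.inv)ᵀ
  val_inv := by rw [← transpose_mul, g.inv_val, transpose_one]
  inv_val := by rw [← transpose_mul, g.val_inv, transpose_one]

@[simp] lemma tr_coe (g : GL (Fin n) ℝ) :
    ((tr g : GL (Fin n) ℝ) : Matrix (Fin n) (Fin n) ℝ) = (g : Matrix (Fin n) (Fin n) ℝ)ᵀ := rfl

@[simp] lemma tr_tr (g : GL (Fin n) ℝ) : tr (tr g) = g := Units.ext (by simp)

lemma tr_mul (a b : GL (Fin n) ℝ) : tr (a * b) = tr b * tr a :=
  Units.ext (by simp [tr, transpose_mul])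

lemma tr_inv (g : GL (Fin n) ℝ) : tr g⁻¹ = (tr g)⁻¹ := Units.ext rfl

lemma continuous_tr : Continuous (tr : GL (Fin n) ℝ → GL (Fin n) ℝ) := by
  refine Units.continuous_iff.2 ⟨?_, ?_⟩
  · exact Units.continuous_val.matrix_transpose
  · have : Continuous (fun g : GL (Fin n) ℝ => ((g⁻¹ : GL (Fin n) ℝ) : Matrix (Fin n) (Fin n) ℝ)) :=
      Units.continuous_coe_inv
    exact this.matrix_transpose

/-- Transpose as a homeomorphism of `GL (Fin n) ℝ`. -/
def trH : GL (Fin n) ℝ ≃ₜ GL (Fin n) ℝ where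
  toFun := tr
  invFun := tr
  left_inv := tr_tr
  right_inv := tr_tr
  continuous_toFun := continuous_tr
  continuous_invFun := continuous_tr

instance : SecondCountableTopology (Matrix (Fin n) (Fin n) ℝ) :=
  inferInstanceAs (SecondCountableTopology (Fin n → Fin n → ℝ))

instance : LocallyCompactSpace (Matrix (Fin n) (Fin n) ℝ) :=
  inferInstanceAs (LocallyCompactSpace (Fin n → Fin n → ℝ))

instance : SecondCountableTopology ((Matrix (Fin n) (Fin n) ℝ)ᵐᵒᵖ) :=
  MulOpposite.opHomeomorph.symm.isEmbedding.secondCountableTopology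

instance : LocallyCompactSpace ((Matrix (Fin n) (Fin n) ℝ)ᵐᵒᵖ) :=
  MulOpposite.opHomeomorph.symm.isClosedEmbedding.locallyCompactSpace

instance : SecondCountableTopology (GL (Fin n) ℝ) :=
  Units.isEmbedding_embedProduct.secondCountableTopology

lemma isClosedEmbedding_embedProduct :
    Topology.IsClosedEmbedding (Units.embedProduct (Matrix (Fin n) (Fin n) ℝ)) := by
  refine ⟨Units.isEmbedding_embedProduct, ?_⟩
  have : Set.range (Units.embedProduct (Matrix (Fin n) (Fin n) ℝ)) =
      {p : Matrix (Fin n) (Fin n) ℝ × (Matrix (Fin n) (Fin n) ℝ)ᵐᵒᵖ |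
        p.1 * p.2.unop = 1 ∧ p.2.unop * p.1 = 1} := by
    ext p
    constructor
    · rintro ⟨u, rfl⟩
      exact ⟨u.val_inv, u.inv_val⟩
    · rintro ⟨h1, h2⟩
      exact ⟨⟨p.1, p.2.unop, h1, h2⟩, rfl⟩
  rw [this]
  exact IsClosed.inter
    (isClosed_eq (continuous_fst.mul (MulOpposite.continuous_unop.comp continuous_snd))
      continuous_const)
    (isClosed_eq ((MulOpposite.continuous_unop.comp continuous_snd).mul continuous_fst)
      continuous_const)

instance : LocallyCompactSpace (GL (Fin n) ℝ) :=
  isClosedEmbedding_embedProduct.locallyCompactSpace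

section Measure

variable [MeasurableSpace (GL (Fin n) ℝ)] [BorelSpace (GL (Fin n) ℝ)]
  (μ : Measure (GL (Fin n) ℝ)) [μ.IsHaarMeasure] [μ.IsMulRightInvariant]

lemma isInvInvariant : μ.IsInvInvariant := by
  constructor
  have hfin : IsFiniteMeasureOnCompacts μ.inv := by
    constructor
    intro K hK
    rw [Measure.inv_apply]
    exact hK.inv.measure_lt_top
  let c : ℝ≥0∞ := Measure.haarScalarFactor μ.inv μ
  have hc : μ.inv = c • μ := Measure.isMulLeftInvariant_eq_smul μ.inv μ
  have : Measure.map Inv.inv (Measure.map Inv.inv μ) = c ^ 2 • μ := by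
    rw [← Measure.inv_def μ, hc, Measure.map_smul, ← Measure.inv_def μ, hc, smul_smul, pow_two]
  have μeq : μ = c ^ 2 • μ := by
    rw [Measure.map_map continuous_inv.measurable continuous_inv.measurable] at this
    simpa only [inv_involutive, Function.Involutive.comp_self, Measure.map_id]
  have K : TopologicalSpace.PositiveCompacts (GL (Fin n) ℝ) := Classical.arbitrary _
  have : c ^ 2 * μ K = 1 ^ 2 * μ K := by
    conv_rhs => rw [μeq]
    simp
  have : c ^ 2 = 1 ^ 2 :=
    (ENNReal.mul_left_inj (Measure.measure_pos_of_nonempty_interior _ K.interior_nonempty).ne'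
      K.isCompact.measure_lt_top.ne).1 this
  have : c = 1 := (ENNReal.pow_right_strictMono two_ne_zero).injective this
  rw [hc, this, one_smul]

lemma map_tr_eq : μ.map tr = μ := by
  have h1 : (μ.map tr).IsMulLeftInvariant := by
    constructor
    intro a
    rw [Measure.map_map (measurable_const_mul a) continuous_tr.measurable]
    have : ((a * ·) ∘ (tr : GL (Fin n) ℝ → GL (Fin n) ℝ)) = tr ∘ (· * tr a) := by
      funext g
      simp only [Function.comp_apply, tr_mul, tr_tr]
    rw [this, ← Measure.map_map continuous_tr.measurable (measurable_mul_const _),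
      map_mul_right_eq_self]
  have h2 : IsFiniteMeasureOnCompacts (μ.map tr) := by
    constructor
    intro K hK
    rw [Measure.map_apply continuous_tr.measurable hK.isClosed.measurableSet]
    have : (tr : GL (Fin n) ℝ → GL (Fin n) ℝ) ⁻¹' K = tr '' K := by
      ext g
      constructor
      · intro hg; exact ⟨tr g, hg, tr_tr g⟩
      · rintro ⟨h, hh, rfl⟩; simpa [tr_tr] using hh
    rw [this]
    exact (hK.image continuous_tr).measure_lt_top
  let c : ℝ≥0∞ := Measure.haarScalarFactor (μ.map tr) μ
  have hc : μ.map tr = c • μ := Measure.isMulLeftInvariant_eq_smul (μ.map tr) μ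
  have hkey : Measure.map tr (Measure.map tr μ) = c ^ 2 • μ := by
    rw [hc, Measure.map_smul, hc, smul_smul, pow_two]
  have μeq : μ = c ^ 2 • μ := by
    rw [Measure.map_map continuous_tr.measurable continuous_tr.measurable] at hkey
    have hid : ((tr : GL (Fin n) ℝ → GL (Fin n) ℝ) ∘ tr) = id := funext tr_tr
    rw [hid, Measure.map_id] at hkey
    exact hkey
  have K : TopologicalSpace.PositiveCompacts (GL (Fin n) ℝ) := Classical.arbitrary _
  have e1 : c ^ 2 * μ K = 1 ^ 2 * μ K := by
    conv_rhs => rw [μeq]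
    simp
  have e2 : c ^ 2 = 1 ^ 2 :=
    (ENNReal.mul_left_inj (Measure.measure_pos_of_nonempty_interior _ K.interior_nonempty).ne'
      K.isCompact.measure_lt_top.ne).1 e1
  have e3 : c = 1 := (ENNReal.pow_right_strictMono two_ne_zero).injective e2
  rw [hc, e3, one_smul]

lemma integral_tr (F : GL (Fin n) ℝ → ℂ) : ∫ h, F (tr h) ∂μ = ∫ h, F h ∂μ :=
  MeasurePreserving.integral_comp ⟨continuous_tr.measurable, map_tr_eq μ⟩
    (trH.measurableEmbedding) F

lemma integral_inv_mul (a : GL (Fin n) ℝ) (F : GL (Fin n) ℝ → ℂ) :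
    ∫ h, F (h⁻¹ * a) ∂μ = ∫ h, F h ∂μ := by
  haveI := isInvInvariant μ
  exact MeasurePreserving.integral_comp
    ((measurePreserving_mul_right μ a).comp (Measure.measurePreserving_inv μ))
    (((Homeomorph.inv (GL (Fin n) ℝ)).trans (Homeomorph.mulRight a)).measurableEmbedding) F

lemma integral_mul_right_k (a : GL (Fin n) ℝ) (F : GL (Fin n) ℝ → ℂ) :
    ∫ h, F (h * a) ∂μ = ∫ h, F h ∂μ :=
  MeasurePreserving.integral_comp (measurePreserving_mul_right μ a)
    ((Homeomorph.mulRight a).measurableEmbedding) F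

end Measure

open scoped MatrixOrder in
lemma exists_orth (g : GL (Fin n) ℝ) :
    ∃ k : GL (Fin n) ℝ, ((k : Matrix (Fin n) (Fin n) ℝ) ∈ Matrix.orthogonalGroup (Fin n) ℝ) ∧
      tr g = k * g * k := by
  have hA : ((g : Matrix (Fin n) (Fin n) ℝ)ᵀ * g).PosSemidef := by
    have := Matrix.posSemidef_conjTranspose_mul_self (g : Matrix (Fin n) (Fin n) ℝ)
    rwa [conjTranspose_eq_transpose_of_trivial] at this
  set P : Matrix (Fin n) (Fin n) ℝ := CFC.sqrt ((g : Matrix (Fin n) (Fin n) ℝ)ᵀ * g) with hPdef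
  have hPP : P * P = (g : Matrix (Fin n) (Fin n) ℝ)ᵀ * g := CFC.sqrt_mul_sqrt_self _ hA.nonneg
  have hPsym : Pᵀ = P := by
    have h := (Matrix.nonneg_iff_posSemidef.1 (CFC.sqrt_nonneg ((g : Matrix (Fin n) (Fin n) ℝ)ᵀ * g))).1
    rwa [Matrix.IsHermitian, conjTranspose_eq_transpose_of_trivial] at h
  have hPunit : IsUnit P := by
    have hgdet : IsUnit (g : Matrix (Fin n) (Fin n) ℝ).det :=
      (Matrix.isUnit_iff_isUnit_det _).1 ⟨g, rfl⟩
    have hdet2 : P.det * P.det = (g : Matrix (Fin n) (Fin n) ℝ).det *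
        (g : Matrix (Fin n) (Fin n) ℝ).det := by
      rw [← det_mul, hPP, det_mul, det_transpose]
    have : IsUnit (P.det * P.det) := by rw [hdet2]; exact hgdet.mul hgdet
    exact (Matrix.isUnit_iff_isUnit_det _).2 (isUnit_of_mul_isUnit_left this)
  obtain ⟨Pu, hPu⟩ := hPunit
  set Q : Matrix (Fin n) (Fin n) ℝ := ((Pu⁻¹ : (Matrix (Fin n) (Fin n) ℝ)ˣ) :
    Matrix (Fin n) (Fin n) ℝ) with hQdef
  have hQP : Q * P = 1 := by rw [hQdef, ← hPu]; exact Pu.inv_mul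
  have hPQ : P * Q = 1 := by rw [hQdef, ← hPu]; exact Pu.mul_inv
  have hQsym : Qᵀ = Q := by
    have h1 : Qᵀ * P = 1 := by
      rw [← hPsym, ← transpose_mul, hPQ, transpose_one]
    calc Qᵀ = Qᵀ * (P * Q) := by rw [hPQ, mul_one]
    _ = (Qᵀ * P) * Q := by rw [mul_assoc]
    _ = Q := by rw [h1, one_mul]
  set O : GL (Fin n) ℝ := g * Pu⁻¹ with hOdef
  have hOcoe : (O : Matrix (Fin n) (Fin n) ℝ) = (g : Matrix (Fin n) (Fin n) ℝ) * Q := rfl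
  have horth : (O : Matrix (Fin n) (Fin n) ℝ)ᵀ * O = 1 := by
    rw [hOcoe, transpose_mul, hQsym]
    calc Q * (g : Matrix (Fin n) (Fin n) ℝ)ᵀ * ((g : Matrix (Fin n) (Fin n) ℝ) * Q)
        = Q * ((g : Matrix (Fin n) (Fin n) ℝ)ᵀ * (g : Matrix (Fin n) (Fin n) ℝ)) * Q := by
          simp only [mul_assoc]
    _ = Q * (P * P) * Q := by rw [hPP]
    _ = (Q * P) * (P * Q) := by simp only [mul_assoc]
    _ = 1 := by rw [hQP, hPQ, one_mul]
  refine ⟨tr O, ?_, ?_⟩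
  · rw [Matrix.mem_orthogonalGroup_iff]
    rw [tr_coe]
    have hstar : star ((O : Matrix (Fin n) (Fin n) ℝ)ᵀ) = (O : Matrix (Fin n) (Fin n) ℝ) := by
      rw [Matrix.star_eq_conjTranspose, conjTranspose_eq_transpose_of_trivial,
        transpose_transpose]
    rw [transpose_transpose]
    exact horth
  · apply Units.ext
    have hgOP : (g : Matrix (Fin n) (Fin n) ℝ) = (O : Matrix (Fin n) (Fin n) ℝ) * P := by
      rw [hOcoe, mul_assoc, hQP, mul_one]
    show (g : Matrix (Fin n) (Fin n) ℝ)ᵀ =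
      (O : Matrix (Fin n) (Fin n) ℝ)ᵀ * (g : Matrix (Fin n) (Fin n) ℝ) *
        (O : Matrix (Fin n) (Fin n) ℝ)ᵀ
    calc (g : Matrix (Fin n) (Fin n) ℝ)ᵀ
        = ((O : Matrix (Fin n) (Fin n) ℝ) * P)ᵀ := by rw [← hgOP]
    _ = P * (O : Matrix (Fin n) (Fin n) ℝ)ᵀ := by rw [transpose_mul, hPsym]
    _ = ((O : Matrix (Fin n) (Fin n) ℝ)ᵀ * (O : Matrix (Fin n) (Fin n) ℝ)) * P *
          (O : Matrix (Fin n) (Fin n) ℝ)ᵀ := by rw [horth, one_mul]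
    _ = (O : Matrix (Fin n) (Fin n) ℝ)ᵀ * (g : Matrix (Fin n) (Fin n) ℝ) *
          (O : Matrix (Fin n) (Fin n) ℝ)ᵀ := by rw [mul_assoc _ _ P, ← hgOP]

lemma biinv_tr (f : GL (Fin n) ℝ → ℂ)
    (hf : ∀ k₁ k₂ g : GL (Fin n) ℝ,
      (k₁ : Matrix (Fin n) (Fin n) ℝ) ∈ Matrix.orthogonalGroup (Fin n) ℝ →
      (k₂ : Matrix (Fin n) (Fin n) ℝ) ∈ Matrix.orthogonalGroup (Fin n) ℝ →
      f (k₁ * g * k₂) = f g) (g : GL (Fin n) ℝ) : f (tr g) = f g := by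
  obtain ⟨k, hk, he⟩ := exists_orth g
  rw [he, hf k k g hk hk]

end GelfandAux

open GelfandAux in
/-- Gelfand's trick: convolution of continuous compactly supported `O(n)`-biinvariant
functions on `GL(n,ℝ)` (with respect to a bi-invariant Haar measure) is commutative. -/
theorem hecke_algebra_commutative (n : ℕ)
    [MeasurableSpace (GL (Fin n) ℝ)] [BorelSpace (GL (Fin n) ℝ)]
    (μ : Measure (GL (Fin n) ℝ)) [μ.IsHaarMeasure] [μ.IsMulRightInvariant]
    (φ ψ : GL (Fin n) ℝ → ℂ)
    (hφc : Continuous φ) (hφs : HasCompactSupport φ)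
    (hψc : Continuous ψ) (hψs : HasCompactSupport ψ)
    (hφK : ∀ k₁ k₂ g : GL (Fin n) ℝ,
      (k₁ : Matrix (Fin n) (Fin n) ℝ) ∈ Matrix.orthogonalGroup (Fin n) ℝ →
      (k₂ : Matrix (Fin n) (Fin n) ℝ) ∈ Matrix.orthogonalGroup (Fin n) ℝ →
      φ (k₁ * g * k₂) = φ g)
    (hψK : ∀ k₁ k₂ g : GL (Fin n) ℝ,
      (k₁ : Matrix (Fin n) (Fin n) ℝ) ∈ Matrix.orthogonalGroup (Fin n) ℝ →
      (k₂ : Matrix (Fin n) (Fin n) ℝ) ∈ Matrix.orthogonalGroup (Fin n) ℝ →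
      ψ (k₁ * g * k₂) = ψ g) :
    ∀ g : GL (Fin n) ℝ,
      ∫ h, φ (g * h⁻¹) * ψ h ∂μ = ∫ h, ψ (g * h⁻¹) * φ h ∂μ := by
  intro g
  have hone : ((1 : GL (Fin n) ℝ) : Matrix (Fin n) (Fin n) ℝ) ∈
      Matrix.orthogonalGroup (Fin n) ℝ := by
    rw [Units.val_one]
    exact one_mem _
  set C : GL (Fin n) ℝ → ℂ := fun x => ∫ h, φ (x * h⁻¹) * ψ h ∂μ with hC
  have hCbi : ∀ k₁ k₂ x : GL (Fin n) ℝ,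
      (k₁ : Matrix (Fin n) (Fin n) ℝ) ∈ Matrix.orthogonalGroup (Fin n) ℝ →
      (k₂ : Matrix (Fin n) (Fin n) ℝ) ∈ Matrix.orthogonalGroup (Fin n) ℝ →
      C (k₁ * x * k₂) = C x := by
    intro k₁ k₂ x h1 h2
    have hright : ∀ y : GL (Fin n) ℝ, C (y * k₂) = C y := by
      intro y
      have hsub := integral_mul_right_k μ k₂ (fun h => φ (y * k₂ * h⁻¹) * ψ h)
      calc C (y * k₂) = ∫ h, φ (y * k₂ * h⁻¹) * ψ h ∂μ := rfl
        _ = ∫ h, φ (y * k₂ * (h * k₂)⁻¹) * ψ (h * k₂) ∂μ := hsub.symm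
        _ = ∫ h, φ (y * h⁻¹) * ψ h ∂μ := by
            refine integral_congr_ae (Filter.Eventually.of_forall fun h => ?_)
            have e1 : y * k₂ * (h * k₂)⁻¹ = y * h⁻¹ := by group
            have e2 : ψ (h * k₂) = ψ h := by
              have := hψK 1 k₂ h hone h2
              rwa [one_mul] at this
            simp only [e1, e2]
    have hleft : C (k₁ * (x * k₂)) = C (x * k₂) := by
      refine integral_congr_ae (Filter.Eventually.of_forall fun h => ?_)
      have := hφK k₁ 1 (x * k₂ * h⁻¹) h1 hone
      rw [mul_one] at this
      simp only [mul_assoc] at this ⊢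
      rw [this]
    rw [mul_assoc, hleft, hright]
  have hCtr : C (tr g) = C g := by
    obtain ⟨k, hk, he⟩ := exists_orth g
    rw [he]
    exact hCbi k k g hk hk
  have hφt : ∀ x, φ (tr x) = φ x := biinv_tr φ hφK
  have hψt : ∀ x, ψ (tr x) = ψ x := biinv_tr ψ hψK
  calc ∫ h, φ (g * h⁻¹) * ψ h ∂μ = C g := rfl
    _ = C (tr g) := hCtr.symm
    _ = ∫ h, φ (tr g * h⁻¹) * ψ h ∂μ := rfl
    _ = ∫ h, φ (tr g * (tr h)⁻¹) * ψ (tr h) ∂μ :=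
        (integral_tr μ (fun h => φ (tr g * h⁻¹) * ψ h)).symm
    _ = ∫ h, φ (h⁻¹ * g) * ψ h ∂μ := by
        refine integral_congr_ae (Filter.Eventually.of_forall fun h => ?_)
        simp only [hψt, ← tr_inv, ← tr_mul, hφt]
    _ = ∫ h, ψ (g * (h⁻¹ * g)⁻¹) * φ (h⁻¹ * g) ∂μ := by
        refine integral_congr_ae (Filter.Eventually.of_forall fun h => ?_)
        have e : g * (h⁻¹ * g)⁻¹ = h := by group
        simp only [e]
        exact mul_comm _ _
    _ = ∫ h, ψ (g * h⁻¹) * φ h ∂μ :=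
        integral_inv_mul μ g (fun h => ψ (g * h⁻¹) * φ h)
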